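/- Let t be a triple pattern (an element of (I∪L∪V) × (I∪V) × (I∪L∪V), possibly with repeated variables) and D an RDF dataset encoded by the relation Quads. Then for every graph identifier j, the tuples with G-attribute equal to j in the bag-semantics evaluation of the translated expression ⟪t⟫^G (selection of Quads by the constant components and by equality of columns for repeated variables, renaming gid to G and one column per distinct variable of t, and projection on G and var(t)) occur without duplicates and are in one-to-one correspondence with the solution mappings μ such that dom(μ) = var(t) and μ(t) ∈ G_j; in particular their number equals the number of triples of G_j matching t. -/

import Mathlib

/-!
Core formalization of SPARQL 1.1 multiset semantics and of the paper's
translation of SPARQL graph patterns into bag-semantics relational algebra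
over the base relations `Graphs` and `Quads`.

Tuples of a translated expression `⟪P⟫^G` (whose attributes are the graph
attribute `G` together with the in-scope variables `var(P)`) are encoded as
pairs `(j, μ) : ℕ × SolMap`, where `j` is the value of the graph attribute and
`μ v = some t` means the attribute `v` holds the RDF term `t`, while
`μ v = none` means the attribute `v` holds the distinguished value `unb`.
-/

noncomputable section
open Classical

/-- RDF terms: IRIs, blank nodes and literals. -/
inductive RDFTerm where
  | iri : String → RDFTerm
  | blank : String → RDFTerm
  | lit : String → RDFTerm
deriving DecidableEq

abbrev Var := String
abbrev Triple := RDFTerm × RDFTerm × RDFTerm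
/-- A graph is a set of triples (no duplicates). -/
abbrev RDFGraph := Finset Triple

/-- An RDF dataset: a default graph and named graphs with pairwise distinct IRIs. -/
structure Dataset where
  dflt : RDFGraph
  named : List (String × RDFGraph)
  distinctNames : (named.map Prod.fst).Nodup

instance : Zero (Option RDFTerm) := ⟨none⟩

/-- A solution mapping: a partial function from variables to RDF terms
(finitely supported; `none` = the variable is unbound / attribute value `unb`). -/
abbrev SolMap := Var →₀ Option RDFTerm

/-- Domain of a solution mapping. -/
def dom (μ : SolMap) : Finset Var := μ.support

/-- Two solution mappings are compatible if they agree on their common domain. -/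
def compatible (μ1 μ2 : SolMap) : Prop := ∀ v ∈ dom μ1 ∩ dom μ2, μ1 v = μ2 v

/-- Union (merge) of two solution mappings; pointwise, this is the function
`first` of the paper: take the first value that is not `unb`. -/
def munion (μ1 μ2 : SolMap) : SolMap :=
  Finsupp.zipWith (fun a b => a.orElse (fun _ => b)) rfl μ1 μ2

/-- SPARQL Join of two multisets of solution mappings:
`Ω1 ⋈ Ω2 = {| μ1 ∪ μ2 : μ1 ∈ Ω1, μ2 ∈ Ω2, μ1 and μ2 compatible |}`. -/
def mJoin (Ω1 Ω2 : Multiset SolMap) : Multiset SolMap :=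
  Ω1.bind fun μ1 => (Ω2.filter fun μ2 => compatible μ1 μ2).map fun μ2 => munion μ1 μ2

/-- A component of a triple pattern: an RDF term or a variable. -/
inductive TP where
  | term : RDFTerm → TP
  | var : Var → TP
deriving DecidableEq

mutual
/-- SPARQL graph patterns.  `opt P1 P2 R` is `(P1 OPTIONAL (P2 FILTER R))`;
plain `OPTIONAL` is recovered with `R = FilterExpr.tt`. -/
inductive Pattern where
  | empty : Pattern
  | triple : TP → TP → TP → Pattern
  | and : Pattern → Pattern → Pattern
  | union : Pattern → Pattern → Pattern
  | minus : Pattern → Pattern → Pattern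
  | opt : Pattern → Pattern → FilterExpr → Pattern
  | filter : Pattern → FilterExpr → Pattern
  | graphIRI : String → Pattern → Pattern
  | graphVar : Var → Pattern → Pattern

/-- SPARQL filter expressions; `base` is an abstract boolean condition on the
current solution mapping, `ex`/`nex` are `EXISTS`/`NOT EXISTS` patterns. -/
inductive FilterExpr where
  | tt : FilterExpr
  | base : (SolMap → Prop) → FilterExpr
  | ex : Pattern → FilterExpr
  | nex : Pattern → FilterExpr
  | fand : FilterExpr → FilterExpr → FilterExpr
  | forr : FilterExpr → FilterExpr → FilterExpr
  | fnot : FilterExpr → FilterExpr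
end

def varTP : TP → Finset Var
  | .term _ => ∅
  | .var v => {v}

/-- In-scope variables `var(P)` of a graph pattern. -/
def varP : Pattern → Finset Var
  | .empty => ∅
  | .triple s p o => varTP s ∪ varTP p ∪ varTP o
  | .and P1 P2 => varP P1 ∪ varP P2
  | .union P1 P2 => varP P1 ∪ varP P2
  | .minus P1 _ => varP P1
  | .opt P1 P2 _ => varP P1 ∪ varP P2
  | .filter P1 _ => varP P1
  | .graphIRI _ P1 => varP P1
  | .graphVar v P1 => insert v (varP P1)

/-- Substitution of a solution mapping in a triple-pattern component. -/
def substTP (μ : SolMap) : TP → TP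
  | .term a => .term a
  | .var v =>
      match μ v with
      | some t => .term t
      | none => .var v

/-- Unification of a triple-pattern component with an RDF term, extending a
solution mapping (handles repeated variables). -/
def unify : TP → RDFTerm → SolMap → Option SolMap
  | .term a, b, μ => if a = b then some μ else none
  | .var v, b, μ =>
      match μ v with
      | none => some (Finsupp.update μ v (some b))
      | some c => if c = b then some μ else none

/-- Matching a triple pattern against a triple: returns the unique solution
mapping `μ` with `dom μ = var(t)` and `μ(t) = tr`, if it exists. -/
def matchT (s p o : TP) (tr : Triple) : Option SolMap :=
  (unify s tr.1 0).bind fun μ1 => (unify p tr.2.1 μ1).bind fun μ2 => unify o tr.2.2 μ2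

/-- Number of named graphs of the dataset; graph identifiers are `0, …, nGraphs D`. -/
def nGraphs (D : Dataset) : ℕ := D.named.length

/-- The graph with identifier `j` (`0` is the default graph). -/
def graphAt (D : Dataset) : ℕ → RDFGraph
  | 0 => D.dflt
  | Nat.succ k => ((D.named[k]?).map Prod.snd).getD ∅

/-- The graph identifier of the named graph with IRI `u`, if any. -/
def gidOf (D : Dataset) (u : String) : Option ℕ :=
  (D.named.findIdx? (fun x => x.1 = u)).map (· + 1)

/-- The named graphs of the dataset, enumerated with their identifiers. -/
def namedEnum (D : Dataset) : List (ℕ × String) :=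
  D.named.zipIdx.map fun p => (p.2 + 1, p.1.1)

mutual
/-- SPARQL 1.1 evaluation `⟦pre(P)⟧_{D(G_g)}` of the graph pattern `P`,
pre-instantiated by the substitution `pre` (needed for `EXISTS`),
over the dataset `D` with active graph `G_g`.  The plain evaluation
`⟦P⟧_{D(G_g)}` is `evalPat D 0 g P`. -/
def evalPat (D : Dataset) (pre : SolMap) : ℕ → Pattern → Multiset SolMap
  | _, .empty => {0}
  | g, .triple s p o =>
      (graphAt D g).val.filterMap fun tr =>
        matchT (substTP pre s) (substTP pre p) (substTP pre o) tr
  | g, .and P1 P2 => mJoin (evalPat D pre g P1) (evalPat D pre g P2)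
  | g, .union P1 P2 => evalPat D pre g P1 + evalPat D pre g P2
  | g, .minus P1 P2 =>
      (evalPat D pre g P1).filter fun μ1 =>
        ∀ μ2 ∈ evalPat D pre g P2, ¬ compatible μ1 μ2 ∨ dom μ1 ∩ dom μ2 = ∅
  | g, .opt P1 P2 R =>
      ((mJoin (evalPat D pre g P1) (evalPat D pre g P2)).filter fun μ => satF D pre g R μ)
      + ((evalPat D pre g P1).filter fun μ1 =>
          ∀ μ2 ∈ evalPat D pre g P2,
            ¬ compatible μ1 μ2 ∨ (compatible μ1 μ2 ∧ ¬ satF D pre g R (munion μ1 μ2)))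
  | g, .filter P1 R => (evalPat D pre g P1).filter fun μ => satF D pre g R μ
  | _, .graphIRI u P1 =>
      match gidOf D u with
      | some i => evalPat D pre i P1
      | none => 0
  | g, .graphVar v P1 =>
      match pre v with
      | some (RDFTerm.iri u) =>
          (match gidOf D u with
           | some i => evalPat D pre i P1
           | none => 0)
      | some _ => 0
      | none =>
          (↑(namedEnum D) : Multiset (ℕ × String)).bind fun p =>
            mJoin (evalPat D pre p.1 P1) {Finsupp.single v (some (RDFTerm.iri p.2))}
termination_by g P => sizeOf P

/-- Satisfaction `μ ⊨_{D(G_g)} R` of a filter expression by a solution mapping,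
under the pre-instantiation `pre`; `EXISTS(P)` holds iff `⟦μ(P)⟧_{D(G_g)}`
is a non-empty multiset. -/
def satF (D : Dataset) (pre : SolMap) : ℕ → FilterExpr → SolMap → Prop
  | _, .tt, _ => True
  | _, .base f, μ => f μ
  | g, .ex P, μ => evalPat D (munion pre μ) g P ≠ 0
  | g, .nex P, μ => evalPat D (munion pre μ) g P = 0
  | g, .fand R1 R2, μ => satF D pre g R1 μ ∧ satF D pre g R2 μ
  | g, .forr R1 R2, μ => satF D pre g R1 μ ∨ satF D pre g R2 μ
  | g, .fnot R1, μ => ¬ satF D pre g R1 μ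
termination_by g R μ => sizeOf R
end

/-! ### The base relations `Graphs` and `Quads` and the relational translation -/

/-- The base relation `Graphs(gid, IRI)`: the tuple `(0, <>)` for the default
graph (no IRI) and a tuple `(i, u_i)` for each named graph. -/
def graphsRel (D : Dataset) : Multiset (ℕ × Option String) :=
  ↑((0, (none : Option String)) :: (namedEnum D).map fun p => (p.1, some p.2))

/-- The base relation `Quads(gid, sub, pred, obj)`. -/
def quadsRel (D : Dataset) : Multiset (ℕ × Triple) :=
  (graphsRel D).bind fun p => (graphAt D p.1).val.map fun tr => (p.1, tr)

/-- `⟪()⟫^G = Π_G[ρ_{G←gid}(Graphs)]`, the translation of the empty graph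
pattern (tuples have the single attribute `G`, i.e. second component `0`). -/
def unitRel (D : Dataset) : Multiset (ℕ × SolMap) := (graphsRel D).map fun p => (p.1, 0)

/-- The condition `comp`: for each common variable `v`,
`v' = unb ∨ v'' = unb ∨ v' = v''`. -/
def compCond (common : Finset Var) (μ1 μ2 : SolMap) : Prop :=
  ∀ v ∈ common, μ1 v = none ∨ μ2 v = none ∨ μ1 v = μ2 v

/-- The condition `disj`: for each common variable `v`, `v = unb ∨ v' = unb`. -/
def disjCond (common : Finset Var) (μ1 μ2 : SolMap) : Prop :=
  ∀ v ∈ common, μ1 v = none ∨ μ2 v = none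

/-- The condition `subst`: for each common variable `v`, `v = v' ∨ v = unb`. -/
def substCond (common : Finset Var) (μ μ' : SolMap) : Prop :=
  ∀ v ∈ common, μ v = μ' v ∨ μ v = none

/-- The translation of `AND`: rename the common variables apart, join on the
graph attribute, select with `comp`, and project back using `first`. -/
def transAnd (common : Finset Var) (R1 R2 : Multiset (ℕ × SolMap)) : Multiset (ℕ × SolMap) :=
  R1.bind fun t1 => R2.bind fun t2 =>
    if t1.1 = t2.1 ∧ compCond common t1.2 t2.2 then {(t1.1, munion t1.2 t2.2)} else 0

/-- Bag-semantics natural join of two relations over identical attribute sets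
(tuples join exactly with equal tuples, multiplicities multiply). -/
def bagJoinSame (A B : Multiset (ℕ × SolMap)) : Multiset (ℕ × SolMap) :=
  A.bind fun t => Multiset.replicate (B.count t) t

/-- Projection of a tuple onto a set of variable attributes. -/
def restrict (μ : SolMap) (S : Finset Var) : SolMap :=
  Finsupp.filter (fun v => v ∈ S) μ

/-- The translation of `MINUS`:
`⟪P1⟫ ⋈ [δ(⟪P1⟫) − Π_{G,var(P1)}(σ_{comp ∧ ¬disj}(⟪P1⟫ ⋈ ρ(⟪P2⟫)))]`. -/
def transMinus (common : Finset Var) (R1 R2 : Multiset (ℕ × SolMap)) : Multiset (ℕ × SolMap) :=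
  let inner := R1.bind fun t1 => R2.bind fun t2 =>
    if t1.1 = t2.1 ∧ compCond common t1.2 t2.2 ∧ ¬ disjCond common t1.2 t2.2 then {t1} else 0
  bagJoinSame R1 (R1.dedup - inner)

/-- The auxiliary expression `E_i` of the translation of `FILTER`, for an
`EXISTS`/`NOT EXISTS` subpattern with translation `Pi'`:
`Π_{G,var(P),ex_i←0}[δ(P') − Π_{G,var(P)}(σ_subst(P' ⋈ ρ(Pi')))]
 ∪ Π_{G,var(P),ex_i←1}[δ(P') − [δ(P') − Π_{G,var(P)}(σ_subst(P' ⋈ ρ(Pi')))]]`. -/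
def buildE (VP Vi : Finset Var) (P' Pi' : Multiset (ℕ × SolMap)) :
    Multiset (ℕ × SolMap × ℕ) :=
  let inner := P'.bind fun t => Pi'.bind fun t' =>
    if t.1 = t'.1 ∧ substCond (VP ∩ Vi) t.2 t'.2 then {t} else 0
  ((P'.dedup - inner).map fun t => (t.1, t.2, 0))
  + ((P'.dedup - (P'.dedup - inner)).map fun t => (t.1, t.2, 1))

/-- Evaluation of the relational condition `filter` obtained from `R`, where
the occurrences of `EXISTS(P_i)` (resp. `NOT EXISTS(P_i)`), in left-to-right
order, are replaced by `ex_i <> 0` (resp. `ex_i = 0`), the values of the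
attributes `ex_i` being supplied by the list `bs`. -/
def condEval : FilterExpr → SolMap → List ℕ → Prop × List ℕ
  | .tt, _, bs => (True, bs)
  | .base f, μ, bs => (f μ, bs)
  | .ex _, _, bs => (bs.headD 0 ≠ 0, bs.tail)
  | .nex _, _, bs => (bs.headD 0 = 0, bs.tail)
  | .fand R1 R2, μ, bs =>
      let r1 := condEval R1 μ bs
      let r2 := condEval R2 μ r1.2
      (r1.1 ∧ r2.1, r2.2)
  | .forr R1 R2, μ, bs =>
      let r1 := condEval R1 μ bs
      let r2 := condEval R2 μ r1.2
      (r1.1 ∨ r2.1, r2.2)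
  | .fnot R1, μ, bs =>
      let r1 := condEval R1 μ bs
      (¬ r1.1, r1.2)

/-- Natural join of the running relation with an auxiliary relation `E_i`
(join on the graph attribute and all the variable attributes). -/
def joinE (A : Multiset (ℕ × SolMap × List ℕ)) (E : Multiset (ℕ × SolMap × ℕ)) :
    Multiset (ℕ × SolMap × List ℕ) :=
  A.bind fun a => E.bind fun e =>
    if a.1 = e.1 ∧ a.2.1 = e.2.1 then {(a.1, a.2.1, a.2.2 ++ [e.2.2])} else 0

/-- The translation of `FILTER`:
`Π_{G,var(P)}[σ_filter(P' ⋈ E_1 ⋈ … ⋈ E_m)]`. -/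
def filterApply (P' : Multiset (ℕ × SolMap)) (Es : List (Multiset (ℕ × SolMap × ℕ)))
    (R : FilterExpr) : Multiset (ℕ × SolMap) :=
  ((Es.foldl joinE (P'.map fun t => (t.1, t.2, ([] : List ℕ)))).filter
      fun x => (condEval R x.2.1 x.2.2).1).map fun x => (x.1, x.2.1)

mutual
/-- The paper's translation `⟪P⟫^G` of a graph pattern into a bag-semantics
relational algebra expression over `Graphs` and `Quads`, evaluated;
tuples are encoded as pairs `(j, μ)` (graph attribute value, values of the
variable attributes with `none` = `unb`). -/
def transP (D : Dataset) : Pattern → Multiset (ℕ × SolMap)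
  | .empty => unitRel D
  | .triple s p o =>
      (quadsRel D).filterMap fun q => (matchT s p o q.2).map fun μ => (q.1, μ)
  | .and P1 P2 => transAnd (varP P1 ∩ varP P2) (transP D P1) (transP D P2)
  | .union P1 P2 => transP D P1 + transP D P2
  | .minus P1 P2 => transMinus (varP P1 ∩ varP P2) (transP D P1) (transP D P2)
  | .opt P1 P2 R =>
      let R1 := transP D P1
      let J := transAnd (varP P1 ∩ varP P2) R1 (transP D P2)
      let F := filterApply J (transEs D (varP P1 ∪ varP P2) J R) R
      J + bagJoinSame R1 (R1.dedup - F.map fun t => (t.1, restrict t.2 (varP P1)))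
  | .filter P1 R =>
      let P' := transP D P1
      filterApply P' (transEs D (varP P1) P' R) R
  | .graphIRI u P1 =>
      let inner : Multiset SolMap :=
        (graphsRel D).bind fun p =>
          if p.2 = some u then (transP D P1).bind (fun t => if t.1 = p.1 then {t.2} else 0)
          else 0
      (graphsRel D).bind fun p => inner.map fun μ => (p.1, μ)
  | .graphVar v P1 =>
      let inner : Multiset SolMap :=
        (graphsRel D).bind fun p =>
          match p.2 with
          | some u =>
              (transP D P1).bind fun t =>
                if t.1 = p.1 then
                  (if v ∈ varP P1 then (if t.2 v = some (RDFTerm.iri u) then {t.2} else 0)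
                   else {Finsupp.update t.2 v (some (RDFTerm.iri u))})
                else 0
          | none => 0
      (graphsRel D).bind fun p => inner.map fun μ => (p.1, μ)
termination_by P => sizeOf P

/-- The list of auxiliary expressions `E_1, …, E_m`, one for each occurrence of
`EXISTS`/`NOT EXISTS` in the filter expression, in left-to-right order. -/
def transEs (D : Dataset) (VP : Finset Var) (P' : Multiset (ℕ × SolMap)) :
    FilterExpr → List (Multiset (ℕ × SolMap × ℕ))
  | .tt => []
  | .base _ => []
  | .ex Pi => [buildE VP (varP Pi) P' (transP D Pi)]
  | .nex Pi => [buildE VP (varP Pi) P' (transP D Pi)]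
  | .fand R1 R2 => transEs D VP P' R1 ++ transEs D VP P' R2
  | .forr R1 R2 => transEs D VP P' R1 ++ transEs D VP P' R2
  | .fnot R1 => transEs D VP P' R1
termination_by R => sizeOf R
end

/-- `⟪P⟫^G` correctly represents `⟦P⟧_{D(G_j)}` for every graph identifier `j`
of the dataset: for each `j` the tuples with graph attribute `j` are in
one-to-one multiplicity-preserving correspondence with the solution mappings
(`unb`, i.e. `none`, encoding that a variable is unbound). -/
def RepOK (D : Dataset) (P : Pattern) : Prop :=
  ∀ j ≤ nGraphs D, ∀ μ : SolMap, (transP D P).count (j, μ) = (evalPat D 0 j P).count μ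

/-! ### Auxiliary lemmas for Statement 2 -/

lemma some_ne_zero' (t : RDFTerm) : (some t : Option RDFTerm) ≠ 0 :=
  fun h => Option.some_ne_none t h

lemma zero_eq_none' : (0 : Option RDFTerm) = none := rfl

lemma substTP_mono {μ μ' : SolMap} {c : TP} {a : RDFTerm}
    (h : substTP μ c = .term a) (hext : ∀ v ∈ dom μ, μ' v = μ v) :
    substTP μ' c = .term a := by
  cases c with
  | term b => simpa [substTP] using h
  | var v =>
    simp only [substTP] at h ⊢
    cases hv : μ v with
    | none => rw [hv] at h; exact absurd h (by simp)
    | some t =>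
      rw [hv] at h
      have hvd : v ∈ dom μ := by
        simp [dom, Finsupp.mem_support_iff, hv, zero_eq_none']
      rw [hext v hvd, hv]
      exact h

lemma unify_sound {c : TP} {b : RDFTerm} {ν ν' : SolMap}
    (h : unify c b ν = some ν') :
    substTP ν' c = .term b ∧ (∀ v ∈ dom ν, ν' v = ν v) ∧ dom ν' = varTP c ∪ dom ν := by
  cases c with
  | term a =>
    simp only [unify] at h
    split_ifs at h with hab
    subst hab
    cases h
    simp [substTP, varTP]
  | var v =>
    simp only [unify] at h
    cases hv : ν v with
    | none =>
      rw [hv] at h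
      cases h
      refine ⟨?_, ?_, ?_⟩
      · simp [substTP, Finsupp.coe_update]
      · intro w hw
        have hwv : w ≠ v := by
          intro e; subst e
          simp [dom, Finsupp.mem_support_iff, hv, zero_eq_none'] at hw
        simp [Finsupp.coe_update, Function.update_of_ne hwv]
      · simp only [dom, varTP, Finsupp.support_update_ne_zero _ _ (some_ne_zero' b),
          Finset.insert_eq]
    | some t =>
      rw [hv] at h
      have h' : (if t = b then some ν else none) = some ν' := h
      split_ifs at h' with htb
      subst htb
      cases h'
      refine ⟨by simp [substTP, hv], fun _ _ => rfl, ?_⟩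
      have hvd : v ∈ dom ν := by
        simp [dom, Finsupp.mem_support_iff, hv, zero_eq_none']
      simp [varTP]
      exact (Finset.insert_eq_of_mem hvd).symm

lemma unify_complete {c : TP} {b : RDFTerm} {μ ν : SolMap}
    (hsub : ∀ v ∈ dom ν, ν v = μ v) (hs : substTP μ c = .term b) :
    ∃ ν', unify c b ν = some ν' ∧ (∀ v ∈ dom ν', ν' v = μ v) ∧
      dom ν' = varTP c ∪ dom ν := by
  cases c with
  | term a =>
    have hab : a = b := by
      simp only [substTP] at hs; injection hs
    subst hab
    exact ⟨ν, by simp [unify], hsub, by simp [varTP]⟩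
  | var v =>
    have hμv : μ v = some b := by
      simp only [substTP] at hs
      cases hv : μ v with
      | none => rw [hv] at hs; exact absurd hs (by simp)
      | some t => rw [hv] at hs; injection hs with h; rw [h]
    cases hv : ν v with
    | none =>
      refine ⟨Finsupp.update ν v (some b), by simp [unify, hv], ?_, ?_⟩
      · intro w hw
        by_cases hwv : w = v
        · subst hwv; simp [Finsupp.coe_update, hμv]
        · rw [Finsupp.coe_update, Function.update_of_ne hwv]
          apply hsub
          have := hw
          rw [dom, Finsupp.support_update_ne_zero _ _ (some_ne_zero' b)] at this
          rcases Finset.mem_insert.mp this with h | h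
          · exact absurd h hwv
          · exact h
      · simp only [dom, varTP, Finsupp.support_update_ne_zero _ _ (some_ne_zero' b),
          Finset.insert_eq]
    | some t =>
      have hvd : v ∈ dom ν := by
        simp [dom, Finsupp.mem_support_iff, hv, zero_eq_none']
      have htb : t = b := by
        have := hsub v hvd; rw [hv, hμv] at this; injection this
      subst htb
      refine ⟨ν, by simp [unify, hv], hsub, ?_⟩
      simp [varTP]
      exact (Finset.insert_eq_of_mem hvd).symm

lemma matchT_sound {s p o : TP} {tr : Triple} {μ : SolMap}
    (h : matchT s p o tr = some μ) :
    dom μ = varTP s ∪ varTP p ∪ varTP o ∧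
      substTP μ s = .term tr.1 ∧ substTP μ p = .term tr.2.1 ∧
      substTP μ o = .term tr.2.2 := by
  unfold matchT at h
  cases h1 : unify s tr.1 0 with
  | none => rw [h1] at h; simp at h
  | some μ1 =>
    rw [h1, Option.bind_some] at h
    cases h2 : unify p tr.2.1 μ1 with
    | none => rw [h2] at h; simp at h
    | some μ2 =>
      rw [h2, Option.bind_some] at h
      obtain ⟨hs1, _, hd1⟩ := unify_sound h1
      obtain ⟨hs2, hext2, hd2⟩ := unify_sound h2
      obtain ⟨hs3, hext3, hd3⟩ := unify_sound h
      have hdom0 : dom (0 : SolMap) = ∅ := rfl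
      refine ⟨?_, ?_, ?_, hs3⟩
      · rw [hd3, hd2, hd1, hdom0]
        ext v; simp; tauto
      · refine substTP_mono (substTP_mono hs1 ?_) hext3
        exact hext2
      · exact substTP_mono hs2 hext3

lemma matchT_complete {s p o : TP} {a b c : RDFTerm} {μ : SolMap}
    (hd : dom μ = varTP s ∪ varTP p ∪ varTP o)
    (hs : substTP μ s = .term a) (hp : substTP μ p = .term b)
    (ho : substTP μ o = .term c) :
    matchT s p o (a, b, c) = some μ := by
  obtain ⟨ν1, h1, ha1, hd1⟩ := unify_complete (ν := (0 : SolMap))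
    (by intro v hv; simp [dom] at hv) hs
  obtain ⟨ν2, h2, ha2, hd2⟩ := unify_complete (ν := ν1) ha1 hp
  obtain ⟨ν3, h3, ha3, hd3⟩ := unify_complete (ν := ν2) ha2 ho
  have hdom0 : dom (0 : SolMap) = ∅ := rfl
  have hdom : dom ν3 = dom μ := by
    rw [hd3, hd2, hd1, hdom0, hd]; ext v; simp; tauto
  have hνμ : ν3 = μ := by
    refine Finsupp.ext fun v => ?_
    by_cases hv : v ∈ dom ν3
    · exact ha3 v hv
    · have hv' : v ∉ dom μ := hdom ▸ hv
      rw [Finsupp.notMem_support_iff.mp hv, Finsupp.notMem_support_iff.mp hv']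
  show ((unify s a 0).bind fun μ1 => (unify p b μ1).bind fun μ2 => unify o c μ2)
      = some μ
  rw [h1, Option.bind_some, h2, Option.bind_some, h3, hνμ]

lemma matchT_inj {s p o : TP} {tr tr' : Triple} {μ : SolMap}
    (h : matchT s p o tr = some μ) (h' : matchT s p o tr' = some μ) : tr = tr' := by
  obtain ⟨_, hs, hp, ho⟩ := matchT_sound h
  obtain ⟨_, hs', hp', ho'⟩ := matchT_sound h'
  have e1 : tr.1 = tr'.1 := by rw [hs] at hs'; injection hs'
  have e2 : tr.2.1 = tr'.2.1 := by rw [hp] at hp'; injection hp'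
  have e3 : tr.2.2 = tr'.2.2 := by rw [ho] at ho'; injection ho'
  exact Prod.ext e1 (Prod.ext e2 e3)

lemma mem_quadsRel {D : Dataset} {j : ℕ} {tr : Triple} :
    (j, tr) ∈ quadsRel D ↔ tr ∈ graphAt D j := by
  constructor
  · intro h
    simp only [quadsRel, Multiset.mem_bind, Multiset.mem_map] at h
    obtain ⟨q, hq, tr', htr', heq⟩ := h
    injection heq with e1 e2
    subst e1; subst e2
    exact htr'
  · intro h
    have hex : ∃ u, (j, u) ∈ graphsRel D := by
      cases j with
      | zero => exact ⟨none, by simp [graphsRel]⟩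
      | succ k =>
        cases hk : D.named[k]? with
        | none =>
          exfalso
          rw [show graphAt D (k+1) = ((D.named[k]?).map Prod.snd).getD ∅ from rfl,
            hk] at h
          simp at h
        | some x =>
          refine ⟨some x.1, ?_⟩
          simp only [graphsRel, namedEnum, Multiset.mem_coe, List.mem_cons,
            List.mem_map]
          right
          refine ⟨(k+1, x.1), ⟨(x, k), ?_, rfl⟩, rfl⟩
          rw [List.mk_mem_zipIdx_iff_getElem?]
          exact hk
    obtain ⟨u, hu⟩ := hex
    simp only [quadsRel, Multiset.mem_bind, Multiset.mem_map]
    exact ⟨(j, u), hu, tr, h, rfl⟩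

lemma mem_transP_triple {D : Dataset} {s p o : TP} {j : ℕ} {μ : SolMap} :
    (j, μ) ∈ transP D (.triple s p o) ↔
      ∃ tr ∈ graphAt D j, matchT s p o tr = some μ := by
  rw [show transP D (.triple s p o)
      = (quadsRel D).filterMap fun q => (matchT s p o q.2).map fun μ => (q.1, μ)
      from by rw [transP]]
  rw [Multiset.mem_filterMap]
  constructor
  · rintro ⟨⟨g, tr⟩, hq, hm⟩
    rw [Option.map_eq_some_iff] at hm
    obtain ⟨ν, hν, heq⟩ := hm
    injection heq with e1 e2
    subst e1; subst e2
    exact ⟨tr, mem_quadsRel.mp hq, hν⟩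
  · rintro ⟨tr, htr, hm⟩
    exact ⟨(j, tr), mem_quadsRel.mpr htr, by simp [hm]⟩

lemma nodup_graphsRel_fst (D : Dataset) :
    (((0, (none : Option String)) :: (namedEnum D).map fun q => (q.1, some q.2)).map
      Prod.fst).Nodup := by
  have hme : (((0, (none : Option String)) ::
        (namedEnum D).map fun q => (q.1, some q.2)).map Prod.fst)
      = 0 :: D.named.zipIdx.map (fun p => p.2 + 1) := by
    simp only [List.map_cons, namedEnum, List.map_map]
    rfl
  rw [hme, List.nodup_cons]
  refine ⟨by simp, ?_⟩
  have h2 : D.named.zipIdx.map (fun p => p.2 + 1)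
      = (D.named.zipIdx.map Prod.snd).map (· + 1) := by
    rw [List.map_map]; rfl
  rw [h2, List.zipIdx_map_snd]
  exact (List.nodup_range' ..).map fun a b h => Nat.succ_injective h
lemma nodup_quadsRel (D : Dataset) : (quadsRel D).Nodup := by
  rw [quadsRel, Multiset.nodup_bind]
  constructor
  · intro q hq
    exact (graphAt D q.1).nodup.map fun a b h => by injection h
  · rw [show graphsRel D
        = ↑((0, (none : Option String)) :: (namedEnum D).map fun q => (q.1, some q.2))
        from rfl]
    rw [@Multiset.pairwise_coe_iff_pairwise _ _ ⟨fun a b h => h.symm⟩]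
    have hfst := nodup_graphsRel_fst D
    rw [List.nodup_iff_sublist] at hfst
    have : List.Pairwise (fun a b => Prod.fst a ≠ Prod.fst b)
        ((0, (none : Option String)) :: (namedEnum D).map fun q => (q.1, some q.2)) := by
      have := (nodup_graphsRel_fst D)
      rw [List.Nodup, List.pairwise_map] at this
      exact this
    refine this.imp ?_
    intro a b hab
    rw [Function.onFun, Multiset.disjoint_left]
    intro x hx hx'
    simp only [Multiset.mem_map] at hx hx'
    obtain ⟨t1, _, e1⟩ := hx
    obtain ⟨t2, _, e2⟩ := hx'
    rw [← e1] at e2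
    have h2 : b.1 = a.1 := by simpa using congrArg Prod.fst e2
    exact hab h2.symm

lemma nodup_transP_triple (D : Dataset) (s p o : TP) :
    (transP D (.triple s p o)).Nodup := by
  rw [show transP D (.triple s p o)
      = (quadsRel D).filterMap fun q => (matchT s p o q.2).map fun μ => (q.1, μ)
      from by rw [transP]]
  refine Multiset.Nodup.filterMap _ ?_ (nodup_quadsRel D)
  rintro ⟨g, tr⟩ ⟨g', tr'⟩ ⟨j, μ⟩ hb hb'
  simp only [Option.mem_def, Option.map_eq_some_iff] at hb hb'
  obtain ⟨ν, hν, e⟩ := hb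
  obtain ⟨ν', hν', e'⟩ := hb'
  injection e with e1 e2
  injection e' with e1' e2'
  subst e1; subst e2
  subst e2'
  rw [e1']
  rw [matchT_inj hν hν']

/-- For a triple pattern `t = (s,p,o)` and any graph identifier
`j`, the tuples with `G`-attribute `j` in the bag-semantics evaluation of
`⟪t⟫^G` occur without duplicates and are in one-to-one correspondence with the
solution mappings `μ` such that `dom(μ) = var(t)` and `μ(t) ∈ G_j`; in
particular their number equals the number of triples of `G_j` matching `t`. -/
theorem triplePattern_correct (D : Dataset) (s p o : TP) (j : ℕ) :
    ((transP D (.triple s p o)).filter fun t => t.1 = j).Nodup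
    ∧ (∀ μ : SolMap,
        (j, μ) ∈ transP D (.triple s p o) ↔
          (dom μ = varP (.triple s p o) ∧
            ∃ a b c : RDFTerm, substTP μ s = .term a ∧ substTP μ p = .term b ∧
              substTP μ o = .term c ∧ (a, b, c) ∈ graphAt D j))
    ∧ Multiset.card ((transP D (.triple s p o)).filter fun t => t.1 = j)
        = ((graphAt D j).filter fun tr => (matchT s p o tr).isSome).card := by
  have hnd : ((transP D (.triple s p o)).filter fun t => t.1 = j).Nodup :=
    (nodup_transP_triple D s p o).filter _
  refine ⟨hnd, ?_, ?_⟩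
  · intro μ
    rw [mem_transP_triple]
    constructor
    · rintro ⟨tr, htr, hm⟩
      obtain ⟨hd, hs, hp, ho⟩ := matchT_sound hm
      exact ⟨by simpa [varP] using hd, tr.1, tr.2.1, tr.2.2, hs, hp, ho,
        by simpa using htr⟩
    · rintro ⟨hd, a, b, c, hs, hp, ho, hmem⟩
      exact ⟨(a, b, c), hmem, matchT_complete (by simpa [varP] using hd) hs hp ho⟩
  · have hcard : Multiset.card ((transP D (.triple s p o)).filter fun t => t.1 = j)
        = (Finset.mk _ hnd).card := rfl
    rw [hcard]
    refine (Finset.card_bij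
      (fun tr htr => (j, (matchT s p o tr).get (Finset.mem_filter.mp htr).2))
      ?_ ?_ ?_).symm
    · intro tr htr
      obtain ⟨h1, h2⟩ := Finset.mem_filter.mp htr
      rw [Finset.mem_mk, Multiset.mem_filter]
      exact ⟨mem_transP_triple.mpr ⟨tr, h1, (Option.some_get h2).symm⟩, rfl⟩
    · intro t1 h1 t2 h2 he
      injection he with e1 e2
      refine matchT_inj (μ := (matchT s p o t1).get (Finset.mem_filter.mp h1).2)
        (Option.some_get _).symm ?_
      rw [e2]
      exact (Option.some_get _).symm
    · rintro ⟨g, μ⟩ hb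
      rw [Finset.mem_mk, Multiset.mem_filter] at hb
      obtain ⟨hmem, hg⟩ := hb
      simp only at hg
      subst hg
      obtain ⟨tr, htr, hm⟩ := mem_transP_triple.mp hmem
      have hsome : (matchT s p o tr).isSome := by rw [hm]; rfl
      refine ⟨tr, Finset.mem_filter.mpr ⟨htr, hsome⟩, ?_⟩
      have hg : ∀ h : (matchT s p o tr).isSome, (matchT s p o tr).get h = μ := by
        intro h
        injection (Option.some_get h).trans hm
      exact Prod.ext rfl (hg _)

end
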